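/- Let T_n, n ∈ ℕ, be positive reals with T_n n² ∈ ℕ and sup_n |T_n − T| n² < ∞ for some T > 0. Then Ξ(x,y;n,T_n) = (n/2^{T_n n²})·C(T_n n², (T_n n² + ⌊nx⌋ − ⌊ny⌋)/2) converges as n → ∞ to √(2/(πT))·e^{−(x−y)²/(2T)}, uniformly over x, y ∈ [0,1] with ⌊nx⌋ − ⌊ny⌋ of the same parity as T_n n². -/

import Mathlib

open Real Filter

lemma log_taylor3 {x : ℝ} (h : |x| ≤ 1/2) :
    |Real.log (1 + x) - (x - x^2/2 + x^3/3)| ≤ 2 * x^4 := by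
  have h1 : |(-x : ℝ)| < 1 := by rw [abs_neg]; linarith [abs_nonneg x]
  have key := Real.abs_log_sub_add_sum_range_le h1 3
  rw [Finset.sum_range_succ, Finset.sum_range_succ, Finset.sum_range_succ,
    Finset.sum_range_zero] at key
  norm_num at key
  have h4 : |x| ^ 4 / (1 - |x|) ≤ 2 * x ^ 4 := by
    have h3 : |x| ^ 4 = x ^ 4 := by rw [← abs_pow, abs_of_nonneg (by positivity)]
    rw [div_le_iff₀ (by linarith)]
    nlinarith [pow_nonneg (abs_nonneg x) 4]
  calc |Real.log (1 + x) - (x - x^2/2 + x^3/3)|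
      = |-x + x ^ 2 / 2 + (-x) ^ 3 / 3 + Real.log (1 + x)| := by
        rw [show -x + x ^ 2 / 2 + (-x) ^ 3 / 3 + Real.log (1 + x)
          = Real.log (1 + x) - (x - x^2/2 + x^3/3) by ring]
    _ ≤ |x| ^ 4 / (1 - |x|) := key
    _ ≤ 2 * x ^ 4 := h4

lemma phi_taylor {t : ℝ} (h : |t| ≤ 1/2) :
    |(1+t) * Real.log (1+t) + (1-t) * Real.log (1-t) - t^2| ≤ 7 * t^4 := by
  have hm : |(-t : ℝ)| ≤ 1/2 := by rwa [abs_neg]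
  have k1 := log_taylor3 h
  have k2 := log_taylor3 hm
  have ht : |t| ≤ 3/2 + 0 := by linarith
  have h1t : |1 + t| ≤ 3/2 := by
    rw [abs_le] at h ⊢; constructor <;> linarith [h.1, h.2]
  have h1t' : |1 - t| ≤ 3/2 := by
    rw [abs_le] at h ⊢; constructor <;> linarith [h.1, h.2]
  have e1 : (1+t) * Real.log (1+t) + (1-t) * Real.log (1-t) - t^2
      = (1+t) * (Real.log (1+t) - (t - t^2/2 + t^3/3))
        + (1-t) * (Real.log (1 + -t) - (-t - (-t)^2/2 + (-t)^3/3))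
        + (2/3) * t^4 := by
    have : (1 : ℝ) - t = 1 + -t := by ring
    rw [this]; ring
  rw [e1]
  have b1 : |(1+t) * (Real.log (1+t) - (t - t^2/2 + t^3/3))| ≤ (3/2) * (2 * t^4) := by
    rw [abs_mul]
    exact mul_le_mul h1t k1 (abs_nonneg _) (by norm_num)
  have b2 : |(1-t) * (Real.log (1 + -t) - (-t - (-t)^2/2 + (-t)^3/3))| ≤ (3/2) * (2 * t^4) := by
    rw [abs_mul]
    rw [show (2:ℝ) * (-t)^4 = 2 * t^4 from by ring] at k2
    exact mul_le_mul h1t' k2 (abs_nonneg _) (by norm_num)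
  have b3 : |(2/3 : ℝ) * t^4| = (2/3) * t^4 := by
    rw [abs_mul, abs_of_nonneg (by positivity : (0:ℝ) ≤ t^4)]; norm_num
  calc |_ + _ + (2/3) * t^4| ≤ |(1+t) * (Real.log (1+t) - (t - t^2/2 + t^3/3))
        + (1-t) * (Real.log (1 + -t) - (-t - (-t)^2/2 + (-t)^3/3))| + |(2/3 : ℝ) * t^4| :=
      abs_add_le _ _
    _ ≤ (|(1+t) * (Real.log (1+t) - (t - t^2/2 + t^3/3))|
        + |(1-t) * (Real.log (1 + -t) - (-t - (-t)^2/2 + (-t)^3/3))|) + |(2/3 : ℝ) * t^4| := by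
      gcongr; exact abs_add_le _ _
    _ ≤ ((3/2) * (2 * t^4) + (3/2) * (2 * t^4)) + (2/3) * t^4 := by
      rw [b3]; gcongr
    _ ≤ 7 * t^4 := by nlinarith [pow_nonneg (sq_nonneg t) 2]


lemma sPos {n : ℕ} (hn : 0 < n) : 0 < Stirling.stirlingSeq n := by
  have h : (0:ℝ) < n := by exact_mod_cast hn
  unfold Stirling.stirlingSeq
  positivity

lemma key_identity (p k : ℕ) (hk : 1 ≤ k) (hkp : k + 1 ≤ p) :
    Real.sqrt p * (p.choose k : ℝ) / 2^p
      = Stirling.stirlingSeq p / (Stirling.stirlingSeq k * Stirling.stirlingSeq (p - k))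
        * Real.sqrt (2/(1 - ((2*(k:ℝ) - p)/p)^2))
        * Real.exp (-((p:ℝ)/2 * ((1 + (2*(k:ℝ) - p)/p) * Real.log (1 + (2*(k:ℝ) - p)/p)
            + (1 - (2*(k:ℝ) - p)/p) * Real.log (1 - (2*(k:ℝ) - p)/p)))) := by
  have hkp' : k ≤ p := by omega
  set q : ℕ := p - k with hq
  have hpkq : p = k + q := by omega
  have hq1 : 1 ≤ q := by omega
  have hKQ : (k:ℝ) + (q:ℝ) = (p:ℝ) := by exact_mod_cast congrArg (Nat.cast (R := ℝ)) hpkq.symm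
  have hK0 : (0:ℝ) < (k:ℝ) := by exact_mod_cast hk
  have hQ0 : (0:ℝ) < (q:ℝ) := by exact_mod_cast hq1
  have hP0 : (0:ℝ) < (p:ℝ) := by exact_mod_cast (show 0 < p by omega)
  have hQP : (q:ℝ) = (p:ℝ) - (k:ℝ) := by linarith
  have h1t : 1 + (2*(k:ℝ) - p)/p = 2*(k:ℝ)/p := by field_simp; ring
  have h1t' : 1 - (2*(k:ℝ) - p)/p = 2*(q:ℝ)/p := by rw [hQP]; field_simp; ring
  -- factorial formulas
  have sfact : ∀ n : ℕ, 0 < n → (Nat.factorial n : ℝ)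
      = Stirling.stirlingSeq n * (Real.sqrt (2*n) * ((n:ℝ)/Real.exp 1)^n) := by
    intro n hn
    have hn' : (0:ℝ) < n := by exact_mod_cast hn
    have hd : Real.sqrt (2*n) * ((n:ℝ)/Real.exp 1)^n ≠ 0 := by positivity
    rw [Stirling.stirlingSeq, div_mul_cancel₀ _ hd]
  have hchoose : (p.choose k : ℝ)
      = (Nat.factorial p : ℝ) / ((Nat.factorial k : ℝ) * (Nat.factorial q : ℝ)) := by
    rw [Nat.cast_choose ℝ hkp']
  -- the exponential part
  have hWpos : (0:ℝ) < ((p:ℝ)/Real.exp 1)^p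
      / (((k:ℝ)/Real.exp 1)^k * (((q:ℝ)/Real.exp 1)^q) * 2^p) := by positivity
  have hlogW : Real.log (((p:ℝ)/Real.exp 1)^p
        / (((k:ℝ)/Real.exp 1)^k * (((q:ℝ)/Real.exp 1)^q) * 2^p))
      = -((p:ℝ)/2 * ((1 + (2*(k:ℝ) - p)/p) * Real.log (1 + (2*(k:ℝ) - p)/p)
          + (1 - (2*(k:ℝ) - p)/p) * Real.log (1 - (2*(k:ℝ) - p)/p))) := by
    rw [Real.log_div (by positivity) (by positivity), Real.log_mul (by positivity) (by positivity),
      Real.log_mul (by positivity) (by positivity), Real.log_pow, Real.log_pow, Real.log_pow,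
      Real.log_div hP0.ne' (Real.exp_ne_zero 1), Real.log_div hK0.ne' (Real.exp_ne_zero 1),
      Real.log_div hQ0.ne' (Real.exp_ne_zero 1), Real.log_exp]
    have e1 : Real.log (1 + (2*(k:ℝ) - p)/p)
        = Real.log 2 + Real.log k - Real.log p := by
      rw [h1t, Real.log_div (by positivity) hP0.ne', Real.log_mul two_ne_zero hK0.ne']
    have e2 : Real.log (1 - (2*(k:ℝ) - p)/p)
        = Real.log 2 + Real.log q - Real.log p := by
      rw [h1t', Real.log_div (by positivity) hP0.ne', Real.log_mul two_ne_zero hQ0.ne']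
    rw [e1, e2, h1t, h1t', hQP]
    simp only [Real.log_pow]
    field_simp
    ring
  have hW : ((p:ℝ)/Real.exp 1)^p / (((k:ℝ)/Real.exp 1)^k * (((q:ℝ)/Real.exp 1)^q) * 2^p)
      = Real.exp (-((p:ℝ)/2 * ((1 + (2*(k:ℝ) - p)/p) * Real.log (1 + (2*(k:ℝ) - p)/p)
          + (1 - (2*(k:ℝ) - p)/p) * Real.log (1 - (2*(k:ℝ) - p)/p)))) := by
    rw [← hlogW, Real.exp_log hWpos]
  -- the sqrt part
  have hS : Real.sqrt p * Real.sqrt (2*(k:ℝ)+2*(q:ℝ))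
        / (Real.sqrt (2*(k:ℝ)) * Real.sqrt (2*(q:ℝ)))
      = Real.sqrt (2/(1 - ((2*(k:ℝ) - p)/p)^2)) := by
    have harg : 2/(1 - ((2*(k:ℝ) - p)/p)^2) = ((p:ℝ)*(2*(k:ℝ)+2*(q:ℝ)))/((2*(k:ℝ))*(2*(q:ℝ))) := by
      have h1mt : 1 - ((2*(k:ℝ) - p)/p)^2 = (2*(k:ℝ))*(2*(q:ℝ))/(p:ℝ)^2 := by
        rw [hQP]; field_simp; ring
      have h2P' : 2*(k:ℝ)+2*(q:ℝ) = 2*(p:ℝ) := by linarith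
      rw [h1mt, h2P']
      field_simp
    rw [harg, Real.sqrt_div (by positivity), Real.sqrt_mul (le_of_lt hP0),
      Real.sqrt_mul (show (0:ℝ) ≤ 2*(k:ℝ) by linarith)]
  -- assemble
  have hsk : Stirling.stirlingSeq k ≠ 0 := (sPos hk).ne'
  have hsq : Stirling.stirlingSeq q ≠ 0 := (sPos hq1).ne'
  have hAk : Real.sqrt (2*(k:ℝ)) ≠ 0 := (Real.sqrt_pos.mpr (by linarith)).ne'
  have hAq : Real.sqrt (2*(q:ℝ)) ≠ 0 := (Real.sqrt_pos.mpr (by linarith)).ne'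
  have hXk : (((k:ℝ)/Real.exp 1)^k : ℝ) ≠ 0 := by positivity
  have hXq : (((q:ℝ)/Real.exp 1)^q : ℝ) ≠ 0 := by positivity
  have h2p : ((2:ℝ)^p) ≠ 0 := by positivity
  have hPsum : ((p:ℝ)) = 2*(k:ℝ)+2*(q:ℝ) - (p:ℝ) := by linarith
  have h2P : (2*(p:ℝ)) = 2*(k:ℝ)+2*(q:ℝ) := by linarith
  rw [hchoose, sfact p (by omega), sfact k hk, sfact q hq1, ← hW, ← hS, h2P]
  field_simp

lemma master (c : ℝ) (p k : ℕ → ℕ) (hp : Filter.Tendsto p atTop atTop)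
    (ha : Filter.Tendsto (fun j => (2*(k j : ℝ) - (p j : ℝ))/Real.sqrt (p j)) atTop (nhds c)) :
    Filter.Tendsto (fun j => Real.sqrt (p j) * ((p j).choose (k j) : ℝ) / 2^(p j)) atTop
      (nhds (Real.sqrt (2/Real.pi) * Real.exp (-c^2/2))) := by
  set u : ℕ → ℝ := fun j => (2*(k j : ℝ) - (p j : ℝ))/Real.sqrt (p j) with hu
  set t : ℕ → ℝ := fun j => (2*(k j : ℝ) - (p j : ℝ))/(p j : ℝ) with htd
  have hPtop : Tendsto (fun j => ((p j : ℕ):ℝ)) atTop atTop := tendsto_natCast_atTop_atTop.comp hp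
  have hsqrt : Tendsto (fun j => Real.sqrt (p j)) atTop atTop := by
    have h2 : Tendsto (fun x:ℝ => x ^ (1/2:ℝ)) atTop atTop := tendsto_rpow_atTop (by norm_num)
    exact (h2.comp hPtop).congr (fun j => (Real.sqrt_eq_rpow _).symm)
  have hinv : Tendsto (fun j => (Real.sqrt (p j))⁻¹) atTop (nhds 0) := hsqrt.inv_tendsto_atTop
  have ht0 : Tendsto t atTop (nhds 0) := by
    have hid : ∀ j, u j * (Real.sqrt (p j))⁻¹ = t j := by
      intro j
      have h1 : Real.sqrt (p j) * Real.sqrt (p j) = ((p j : ℕ):ℝ) :=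
        Real.mul_self_sqrt (Nat.cast_nonneg _)
      simp only [hu, htd]
      rcases eq_or_lt_of_le (Nat.cast_nonneg (α:=ℝ) (p j)) with h0|h0
      · simp [← h0]
      · have hs : Real.sqrt (p j) ≠ 0 := (Real.sqrt_pos.mpr h0).ne'
        have hp0 : ((p j:ℕ):ℝ) ≠ 0 := h0.ne'
        field_simp
        rw [Real.sq_sqrt (Nat.cast_nonneg _)]; ring
    have := (ha.mul hinv).congr hid
    simpa using this
  have ev_t : ∀ᶠ j in atTop, |t j| < 1/2 := by
    have hmem : Set.Ioo (-(1/2):ℝ) (1/2) ∈ nhds (0:ℝ) := Ioo_mem_nhds (by norm_num) (by norm_num)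
    filter_upwards [ht0 hmem] with j hj
    rw [abs_lt]; exact ⟨hj.1, hj.2⟩
  have ev_kq : ∀ᶠ j in atTop, 1 ≤ k j ∧ k j + 1 ≤ p j := by
    filter_upwards [ev_t, hp.eventually_ge_atTop 8] with j h1 h2
    have hP8 : (8:ℝ) ≤ (p j : ℝ) := by exact_mod_cast h2
    have hP0 : (0:ℝ) < (p j : ℝ) := by linarith
    have habs : |2*(k j : ℝ) - (p j:ℝ)| ≤ (p j:ℝ)/2 := by
      have := h1.le
      rw [htd] at this
      simp only at this
      rw [abs_div, abs_of_pos hP0, div_le_iff₀ hP0] at this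
      linarith [this]
    rw [abs_le] at habs
    constructor
    · have : (1:ℝ) ≤ (k j : ℝ) := by linarith
      exact_mod_cast this
    · have : ((k j : ℝ)) + 1 ≤ (p j : ℝ) := by linarith
      exact_mod_cast this
  have hktop : Tendsto k atTop atTop := by
    rw [tendsto_atTop]
    intro b
    filter_upwards [ev_t, hp.eventually_ge_atTop (8 + 4*b)] with j h1 h2
    have hP : (8:ℝ) + 4*(b:ℝ) ≤ (p j : ℝ) := by exact_mod_cast h2
    have hP0 : (0:ℝ) < (p j : ℝ) := by linarith [(Nat.cast_nonneg b : (0:ℝ) ≤ b)]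
    have habs : |2*(k j : ℝ) - (p j:ℝ)| ≤ (p j:ℝ)/2 := by
      have := h1.le
      rw [htd] at this
      simp only at this
      rw [abs_div, abs_of_pos hP0, div_le_iff₀ hP0] at this
      linarith [this]
    rw [abs_le] at habs
    have : (b:ℝ) ≤ (k j : ℝ) := by linarith [(Nat.cast_nonneg b : (0:ℝ) ≤ b)]
    exact_mod_cast this
  have hqtop : Tendsto (fun j => p j - k j) atTop atTop := by
    rw [tendsto_atTop]
    intro b
    filter_upwards [ev_t, hp.eventually_ge_atTop (8 + 4*b)] with j h1 h2
    have hP : (8:ℝ) + 4*(b:ℝ) ≤ (p j : ℝ) := by exact_mod_cast h2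
    have hP0 : (0:ℝ) < (p j : ℝ) := by linarith [(Nat.cast_nonneg b : (0:ℝ) ≤ b)]
    have habs : |2*(k j : ℝ) - (p j:ℝ)| ≤ (p j:ℝ)/2 := by
      have := h1.le
      rw [htd] at this
      simp only at this
      rw [abs_div, abs_of_pos hP0, div_le_iff₀ hP0] at this
      linarith [this]
    rw [abs_le] at habs
    have hb : (k j:ℝ) + (b:ℝ) ≤ (p j : ℝ) := by linarith [(Nat.cast_nonneg b : (0:ℝ) ≤ b)]
    have hb' : k j + b ≤ p j := by exact_mod_cast hb
    omega
  -- limits of the three factors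
  have hsp := Stirling.tendsto_stirlingSeq_sqrt_pi.comp hp
  have hsk := Stirling.tendsto_stirlingSeq_sqrt_pi.comp hktop
  have hsq := Stirling.tendsto_stirlingSeq_sqrt_pi.comp hqtop
  have hpi : (0:ℝ) < Real.sqrt Real.pi * Real.sqrt Real.pi := by positivity
  have hF1 : Tendsto (fun j => Stirling.stirlingSeq (p j)
      / (Stirling.stirlingSeq (k j) * Stirling.stirlingSeq (p j - k j))) atTop
      (nhds (Real.sqrt Real.pi / (Real.sqrt Real.pi * Real.sqrt Real.pi))) :=
    hsp.div (hsk.mul hsq) hpi.ne'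
  have h1mt : Tendsto (fun j => 1 - t j^2) atTop (nhds 1) := by
    have := tendsto_const_nhds (x := (1:ℝ)) (f := atTop (α := ℕ))
    have h2 : Tendsto (fun j => t j^2) atTop (nhds 0) := by
      have := ht0.mul ht0
      simpa [sq] using this
    simpa using tendsto_const_nhds.sub h2
  have hF2 : Tendsto (fun j => Real.sqrt (2/(1 - t j^2))) atTop (nhds (Real.sqrt 2)) := by
    have h3 : Tendsto (fun j => 2/(1 - t j^2)) atTop (nhds (2/1)) :=
      tendsto_const_nhds.div h1mt one_ne_zero
    have := h3.sqrt
    simpa using this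
  -- the exponent
  set g : ℕ → ℝ := fun j => (p j:ℝ)/2 * ((1 + t j) * Real.log (1 + t j)
      + (1 - t j) * Real.log (1 - t j)) with hgd
  have hu2 : Tendsto (fun j => u j^2/2) atTop (nhds (c^2/2)) := by
    have := (ha.mul ha).div_const 2
    have h4 : Tendsto (fun j => u j * u j / 2) atTop (nhds (c*c/2)) := this
    have h5 : (fun j => u j * u j / 2) = (fun j => u j^2/2) := by funext j; ring
    rw [h5] at h4
    convert h4 using 2
    ring
  have hr0 : Tendsto (fun j => g j - u j^2/2) atTop (nhds 0) := by
    apply squeeze_zero_norm' (a := fun j => 7/2 * u j^4 * ((p j:ℝ))⁻¹)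
    · filter_upwards [ev_t, hp.eventually_ge_atTop 1] with j h1 h2
      have hP0 : (0:ℝ) < (p j : ℝ) := by exact_mod_cast h2
      have hsq2 : Real.sqrt (p j) ^ 2 = ((p j:ℕ):ℝ) := Real.sq_sqrt (Nat.cast_nonneg _)
      have hut : u j ^ 2 = (2*(k j : ℝ) - (p j : ℝ))^2 / (p j : ℝ) := by
        simp only [hu]
        rw [div_pow, hsq2]
      have heq : g j - u j^2/2 = (p j:ℝ)/2 * (((1 + t j) * Real.log (1 + t j)
          + (1 - t j) * Real.log (1 - t j)) - t j^2) := by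
        simp only [hgd, htd]
        rw [hut]
        field_simp
      rw [heq]
      have hb := phi_taylor h1.le
      have hu4 : 7/2 * u j^4 * ((p j:ℝ))⁻¹ = (p j:ℝ)/2 * (7 * t j^4) := by
        simp only [hu, htd]
        rw [div_pow, div_pow, show Real.sqrt ((p j:ℕ):ℝ)^4 = ((p j:ℕ):ℝ)^2 by
          rw [show (4:ℕ) = 2*2 by norm_num, pow_mul, hsq2]]
        field_simp
      rw [Real.norm_eq_abs, abs_mul, abs_of_pos (by positivity : (0:ℝ) < (p j:ℝ)/2), hu4]
      exact mul_le_mul_of_nonneg_left hb (by positivity)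
    · have h6 : Tendsto (fun j => u j^4) atTop (nhds (c^4)) := by
        have := ((ha.mul ha).mul (ha.mul ha))
        have h7 : (fun j => u j * u j * (u j * u j)) = fun j => u j^4 := by funext j; ring
        rw [h7] at this
        convert this using 2
        ring
      have := (h6.const_mul (7/2)).mul hPtop.inv_tendsto_atTop
      simpa using this
  have hg : Tendsto g atTop (nhds (c^2/2)) := by
    have := hu2.add hr0
    simp only [add_zero] at this
    exact this.congr (fun j => by ring)
  have hF3 : Tendsto (fun j => Real.exp (-g j)) atTop (nhds (Real.exp (-(c^2/2)))) := by
    have := (Real.continuous_exp.tendsto (-(c^2/2))).comp hg.neg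
    simpa [Function.comp_def] using this
  -- combine
  have hFinal := (hF1.mul hF2).mul hF3
  have hval : Real.sqrt Real.pi / (Real.sqrt Real.pi * Real.sqrt Real.pi) * Real.sqrt 2
      * Real.exp (-(c^2/2)) = Real.sqrt (2/Real.pi) * Real.exp (-c^2/2) := by
    have hpi' : Real.sqrt Real.pi ≠ 0 := by positivity
    rw [Real.sqrt_div (by norm_num : (0:ℝ) ≤ 2), show -c^2/2 = -(c^2/2) by ring]
    field_simp
  rw [← hval]
  apply Filter.Tendsto.congr' _ hFinal
  filter_upwards [ev_kq] with j hj
  exact (key_identity (p j) (k j) hj.1 hj.2).symm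

theorem stmt11 (T : ℝ) (hT : 0 < T) (Tn : ℕ → ℝ) (m : ℕ → ℕ)
    (hTn : ∀ n, 0 < Tn n) (hm : ∀ n, (m n : ℝ) = Tn n * (n : ℝ) ^ 2)
    (K : ℝ) (hK : ∀ n, |Tn n - T| * (n : ℝ) ^ 2 ≤ K) :
    ∀ ε > (0 : ℝ), ∃ N : ℕ, ∀ n ≥ N, ∀ x ∈ Set.Icc (0 : ℝ) 1, ∀ y ∈ Set.Icc (0 : ℝ) 1,
      (m n : ℤ) % 2 = (⌊(n : ℝ) * x⌋ - ⌊(n : ℝ) * y⌋) % 2 →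
      |((n : ℝ) / 2 ^ (m n)) *
            ((Nat.choose (m n) (((m n : ℤ) + ⌊(n : ℝ) * x⌋ - ⌊(n : ℝ) * y⌋) / 2).toNat : ℕ) : ℝ)
          - Real.sqrt (2 / (π * T)) * Real.exp (-(x - y) ^ 2 / (2 * T))| < ε := by
  intro ε hε
  by_contra hcon
  push_neg at hcon
  choose n hn x hx y hy hpar herr using hcon
  have hK0 : 0 ≤ K := le_trans (by positivity) (hK 1)
  have hmem : ∀ j, x j - y j ∈ Set.Icc (-1 : ℝ) 1 := by
    intro j
    have h1 := hx j; have h2 := hy j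
    simp only [Set.mem_Icc] at *
    constructor <;> linarith [h1.1, h1.2, h2.1, h2.2]
  obtain ⟨d, hdmem, ψ, hψ, hdt⟩ := (isCompact_Icc (a := (-1:ℝ)) (b := 1)).tendsto_subseq hmem
  set N : ℕ → ℕ := fun j => n (ψ j) with hN
  set pp : ℕ → ℕ := fun j => m (N j) with hpp
  set aa : ℕ → ℤ := fun j => ⌊(N j : ℝ) * x (ψ j)⌋ - ⌊(N j : ℝ) * y (ψ j)⌋ with haa
  set kk : ℕ → ℕ :=
    fun j => (((pp j : ℤ) + ⌊(N j : ℝ) * x (ψ j)⌋ - ⌊(N j : ℝ) * y (ψ j)⌋) / 2).toNat with hkk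
  have hNtop : Tendsto N atTop atTop :=
    tendsto_atTop_mono (fun j => le_trans (hψ.le_apply) (hn (ψ j))) tendsto_id
  have hNr : Tendsto (fun j => ((N j : ℕ) : ℝ)) atTop atTop :=
    tendsto_natCast_atTop_atTop.comp hNtop
  have hN2 : Tendsto (fun j => ((N j : ℕ) : ℝ)^2) atTop atTop :=
    (tendsto_pow_atTop two_ne_zero).comp hNr
  have hppb : ∀ j, T * ((N j:ℕ):ℝ)^2 - K ≤ (pp j : ℝ) := by
    intro j
    have h1 := hK (N j)
    have h2 := hm (N j)
    have h3 : (T - Tn (N j)) * ((N j:ℕ):ℝ)^2 ≤ K := by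
      refine le_trans ?_ h1
      have hh : T - Tn (N j) ≤ |Tn (N j) - T| := by
        rw [abs_sub_comm]; exact le_abs_self _
      exact mul_le_mul_of_nonneg_right hh (by positivity)
    rw [hpp]; simp only; rw [h2]; nlinarith [h3]
  have hppR : Tendsto (fun j => (pp j : ℝ)) atTop atTop := by
    apply tendsto_atTop_mono hppb
    have h4 : Tendsto (fun j => T * ((N j:ℕ):ℝ)^2) atTop atTop := hN2.const_mul_atTop hT
    simpa [sub_eq_add_neg] using tendsto_atTop_add_const_right atTop (-K) h4
  have hptop : Tendsto pp atTop atTop := by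
    rw [← tendsto_natCast_atTop_iff (R := ℝ)]; exact hppR
  -- pp / N^2 → T
  have hKN : Tendsto (fun j => K / ((N j:ℕ):ℝ)^2) atTop (nhds 0) :=
    tendsto_const_nhds.div_atTop hN2
  have hpn2 : Tendsto (fun j => (pp j : ℝ) / ((N j:ℕ):ℝ)^2) atTop (nhds T) := by
    have hb : ∀ᶠ j in atTop, ‖(pp j : ℝ) / ((N j:ℕ):ℝ)^2 - T‖ ≤ K / ((N j:ℕ):ℝ)^2 := by
      filter_upwards [hNtop.eventually_ge_atTop 1] with j hj
      have hj1 : (1:ℝ) ≤ ((N j:ℕ):ℝ) := by exact_mod_cast hj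
      have hj0 : (0:ℝ) < ((N j:ℕ):ℝ)^2 := by positivity
      have h2 := hm (N j)
      have h1 := hK (N j)
      have he : (pp j : ℝ) / ((N j:ℕ):ℝ)^2 - T = Tn (N j) - T := by
        rw [hpp]; simp only; rw [h2]; field_simp
      rw [Real.norm_eq_abs, he, le_div_iff₀ hj0]
      exact h1
    have h5 := squeeze_zero_norm' hb hKN
    have h6 := h5.add (tendsto_const_nhds (x := T) (f := atTop (α := ℕ)))
    simp only [zero_add] at h6
    exact h6.congr (fun j => by ring)
  have hsT : Real.sqrt T ≠ 0 := (Real.sqrt_pos.mpr hT).ne'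
  have hsq : Tendsto (fun j => Real.sqrt (pp j) / ((N j:ℕ):ℝ)) atTop (nhds (Real.sqrt T)) := by
    have h7 := hpn2.sqrt
    apply h7.congr'
    filter_upwards [hNtop.eventually_ge_atTop 1] with j hj
    have hj0 : (0:ℝ) ≤ ((N j:ℕ):ℝ) := Nat.cast_nonneg _
    rw [Real.sqrt_div (Nat.cast_nonneg _), Real.sqrt_sq hj0]
  have hNs : Tendsto (fun j => ((N j:ℕ):ℝ) / Real.sqrt (pp j)) atTop
      (nhds (Real.sqrt T)⁻¹) := by
    have h8 := hsq.inv₀ hsT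
    apply h8.congr
    intro j
    rw [inv_div]
  -- big eventual fact
  have hbig : ∀ᶠ j in atTop, ((N j:ℕ):ℝ) + 1 ≤ (pp j : ℝ) ∧ 1 ≤ N j := by
    filter_upwards [hNr.eventually_ge_atTop (2/T), hNr.eventually_ge_atTop (K+1),
      hNtop.eventually_ge_atTop 1] with j h1 h2 h3
    refine ⟨?_, h3⟩
    have h5 := hppb j
    have h6 : (0:ℝ) < ((N j:ℕ):ℝ) := by
      have : (1:ℝ) ≤ ((N j:ℕ):ℝ) := by exact_mod_cast h3
      linarith
    have h7 : 2 ≤ T * ((N j:ℕ):ℝ) := by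
      rw [div_le_iff₀ hT] at h1
      linarith [h1]
    nlinarith [h5, h7, h2, h6]
  -- |aa| ≤ N
  have haaN : ∀ j, |(aa j : ℝ)| ≤ ((N j:ℕ):ℝ) := by
    intro j
    have hxj := hx (ψ j); have hyj := hy (ψ j)
    simp only [Set.mem_Icc] at hxj hyj
    have h0N : (0:ℝ) ≤ ((N j:ℕ):ℝ) := Nat.cast_nonneg _
    have hfx1 : (0:ℝ) ≤ (⌊((N j:ℕ):ℝ) * x (ψ j)⌋ : ℝ) := by
      have : (0:ℤ) ≤ ⌊((N j:ℕ):ℝ) * x (ψ j)⌋ := Int.floor_nonneg.mpr (by nlinarith [hxj.1])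
      exact_mod_cast this
    have hfx2 : (⌊((N j:ℕ):ℝ) * x (ψ j)⌋ : ℝ) ≤ ((N j:ℕ):ℝ) :=
      le_trans (Int.floor_le _) (by nlinarith [hxj.2])
    have hfy1 : (0:ℝ) ≤ (⌊((N j:ℕ):ℝ) * y (ψ j)⌋ : ℝ) := by
      have : (0:ℤ) ≤ ⌊((N j:ℕ):ℝ) * y (ψ j)⌋ := Int.floor_nonneg.mpr (by nlinarith [hyj.1])
      exact_mod_cast this
    have hfy2 : (⌊((N j:ℕ):ℝ) * y (ψ j)⌋ : ℝ) ≤ ((N j:ℕ):ℝ) :=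
      le_trans (Int.floor_le _) (by nlinarith [hyj.2])
    rw [haa]
    push_cast
    rw [abs_le]
    constructor <;> linarith
  -- aa / N → d
  have haN : Tendsto (fun j => (aa j : ℝ) / ((N j:ℕ):ℝ)) atTop (nhds d) := by
    have hr : Tendsto (fun j => (aa j : ℝ) / ((N j:ℕ):ℝ) - (x (ψ j) - y (ψ j))) atTop
        (nhds 0) := by
      apply squeeze_zero_norm' (a := fun j => 2 / ((N j:ℕ):ℝ))
      · filter_upwards [hNtop.eventually_ge_atTop 1] with j hj
        have hj1 : (1:ℝ) ≤ ((N j:ℕ):ℝ) := by exact_mod_cast hj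
        have hj0 : (0:ℝ) < ((N j:ℕ):ℝ) := by linarith
        have hb1 : ((N j:ℕ):ℝ) * x (ψ j) - 1 < (⌊((N j:ℕ):ℝ) * x (ψ j)⌋ : ℝ) :=
          Int.sub_one_lt_floor _
        have hb2 : (⌊((N j:ℕ):ℝ) * x (ψ j)⌋ : ℝ) ≤ ((N j:ℕ):ℝ) * x (ψ j) := Int.floor_le _
        have hb3 : ((N j:ℕ):ℝ) * y (ψ j) - 1 < (⌊((N j:ℕ):ℝ) * y (ψ j)⌋ : ℝ) :=
          Int.sub_one_lt_floor _
        have hb4 : (⌊((N j:ℕ):ℝ) * y (ψ j)⌋ : ℝ) ≤ ((N j:ℕ):ℝ) * y (ψ j) := Int.floor_le _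
        have he : (aa j : ℝ) / ((N j:ℕ):ℝ) - (x (ψ j) - y (ψ j))
            = ((aa j : ℝ) - ((N j:ℕ):ℝ) * (x (ψ j) - y (ψ j))) / ((N j:ℕ):ℝ) := by
          field_simp
        have haar : (aa j : ℝ) = (⌊((N j:ℕ):ℝ) * x (ψ j)⌋ : ℝ)
            - (⌊((N j:ℕ):ℝ) * y (ψ j)⌋ : ℝ) := by
          rw [haa]; push_cast; ring
        rw [Real.norm_eq_abs, he, abs_div, abs_of_pos hj0]
        gcongr
        rw [haar, abs_le]
        constructor <;> linarith
      · exact tendsto_const_nhds.div_atTop hNr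
    have h9 := hdt.add hr
    simp only [add_zero] at h9
    apply h9.congr
    intro j
    simp only [Function.comp]
    ring
  -- 2 kk - pp = aa eventually
  have h2k : ∀ᶠ j in atTop, 2*(kk j : ℝ) - (pp j : ℝ) = (aa j : ℝ) := by
    filter_upwards [hbig] with j hj
    have hnn : 0 ≤ (pp j : ℤ) + aa j := by
      have h1 : -((N j:ℕ):ℝ) ≤ (aa j : ℝ) := (abs_le.mp (haaN j)).1
      have h2 : (0:ℝ) ≤ (pp j : ℝ) + (aa j : ℝ) := by linarith [hj.1]
      exact_mod_cast h2
    have e1 : ((pp j : ℤ) + ⌊((N j:ℕ):ℝ) * x (ψ j)⌋ - ⌊((N j:ℕ):ℝ) * y (ψ j)⌋)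
        = (pp j : ℤ) + aa j := by rw [haa]; ring
    have e2 : (kk j : ℤ) = ((pp j : ℤ) + aa j)/2 := by
      rw [hkk]; simp only; rw [e1]
      exact Int.toNat_of_nonneg (Int.ediv_nonneg hnn (by norm_num))
    have hpar' : (pp j : ℤ) % 2 = aa j % 2 := hpar (ψ j)
    have h2kZ : 2 * (kk j : ℤ) = (pp j : ℤ) + aa j := by omega
    have : (2 * (kk j : ℤ) : ℝ) = ((pp j : ℤ) + aa j : ℝ) := by exact_mod_cast h2kZ
    push_cast at this
    linarith
  -- u → d / √T
  have hu : Tendsto (fun j => (2*(kk j : ℝ) - (pp j : ℝ))/Real.sqrt (pp j)) atTop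
      (nhds (d * (Real.sqrt T)⁻¹)) := by
    have base := haN.mul hNs
    apply Filter.Tendsto.congr' _ base
    filter_upwards [h2k, hbig] with j hj hb
    have hN0 : ((N j:ℕ):ℝ) ≠ 0 := by
      have : (1:ℝ) ≤ ((N j:ℕ):ℝ) := by exact_mod_cast hb.2
      linarith
    rw [div_mul_div_comm, mul_comm ((aa j : ℝ)) (((N j:ℕ):ℝ)),
      mul_div_mul_left _ _ hN0, hj]
  have hM := master (d * (Real.sqrt T)⁻¹) pp kk hptop hu
  -- Ξ limit
  have hXi : Tendsto (fun j => ((N j:ℕ):ℝ) / 2^(pp j) * ((pp j).choose (kk j) : ℝ)) atTop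
      (nhds ((Real.sqrt T)⁻¹ * (Real.sqrt (2/Real.pi)
        * Real.exp (-(d * (Real.sqrt T)⁻¹)^2/2)))) := by
    have base := hNs.mul hM
    apply Filter.Tendsto.congr' _ base
    filter_upwards [hptop.eventually_ge_atTop 1] with j hj
    have hp0 : (0:ℝ) < (pp j : ℝ) := by exact_mod_cast hj
    have hs0 : Real.sqrt (pp j) ≠ 0 := (Real.sqrt_pos.mpr hp0).ne'
    have h2p : ((2:ℝ)^(pp j)) ≠ 0 := by positivity
    field_simp
  -- target limit
  have hcont : Continuous (fun s : ℝ => Real.sqrt (2/(π*T)) * Real.exp (-s^2/(2*T))) := by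
    have : Continuous (fun s : ℝ => -s^2/(2*T)) := by fun_prop
    exact continuous_const.mul (Real.continuous_exp.comp this)
  have htar : Tendsto (fun j => Real.sqrt (2/(π*T))
      * Real.exp (-(x (ψ j) - y (ψ j))^2/(2*T))) atTop
      (nhds (Real.sqrt (2/(π*T)) * Real.exp (-d^2/(2*T)))) := by
    have := (hcont.tendsto d).comp hdt
    simpa [Function.comp_def] using this
  -- the two limits agree
  have hlimeq : (Real.sqrt T)⁻¹ * (Real.sqrt (2/Real.pi)
      * Real.exp (-(d * (Real.sqrt T)⁻¹)^2/2))
      = Real.sqrt (2/(π*T)) * Real.exp (-d^2/(2*T)) := by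
    have hsT2 : (Real.sqrt T)^2 = T := Real.sq_sqrt hT.le
    have hexp : -(d * (Real.sqrt T)⁻¹)^2/2 = -d^2/(2*T) := by
      rw [mul_pow, inv_pow, hsT2]
      ring
    have hsqrt : Real.sqrt (2/(π*T)) = Real.sqrt (2/Real.pi) * (Real.sqrt T)⁻¹ := by
      rw [show (2:ℝ)/(π*T) = (2/π)/T by ring, Real.sqrt_div (by positivity)]
      ring
    rw [hexp, hsqrt]
    ring
  -- contradiction
  have hdiff : Tendsto (fun j => ((N j:ℕ):ℝ) / 2^(pp j) * ((pp j).choose (kk j) : ℝ)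
      - Real.sqrt (2/(π*T)) * Real.exp (-(x (ψ j) - y (ψ j))^2/(2*T))) atTop (nhds 0) := by
    have := hXi.sub htar
    rw [hlimeq, sub_self] at this
    exact this
  have habs : Tendsto (fun j => |((N j:ℕ):ℝ) / 2^(pp j) * ((pp j).choose (kk j) : ℝ)
      - Real.sqrt (2/(π*T)) * Real.exp (-(x (ψ j) - y (ψ j))^2/(2*T))|) atTop (nhds 0) := by
    have := hdiff.abs
    simpa using this
  have hev : ∀ᶠ j in atTop, |((N j:ℕ):ℝ) / 2^(pp j) * ((pp j).choose (kk j) : ℝ)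
      - Real.sqrt (2/(π*T)) * Real.exp (-(x (ψ j) - y (ψ j))^2/(2*T))| < ε :=
    habs (Iio_mem_nhds hε)
  obtain ⟨j, hj⟩ := hev.exists
  exact absurd hj (not_lt.mpr (herr (ψ j)))
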